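/- arXiv:1806.02232 — 2 statements merged into one kernel-verified Lean document; each statement's English description precedes it below -/
import Mathlib

section
/- Let b = λ + iη with λ, η ∈ ℝ and λ > 0, and let 𝒫ₙ(b;x) be the complementary Romanovski–Routh polynomials defined by 𝒫₀(b;x) = 1, 𝒫₁(b;x) = x − c₁, and 𝒫ₙ₊₁(b;x) = (x − cₙ₊₁)𝒫ₙ(b;x) − dₙ₊₁(x² + 1)𝒫ₙ₋₁(b;x) for n ≥ 1, where cₙ = η/(λ+n−1) and dₙ₊₁ = n(2λ+n−1)/(4(λ+n−1)(λ+n)). Then for every n ≥ 1 and all x, (x² + 1)·𝒫ₙ''(b;x) − 2[(λ+n−1)x − η]·𝒫ₙ'(b;x) + n(n−1+2λ)·𝒫ₙ(b;x) = 0, where primes denote derivatives with respect to x. -/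
/-- Complementary Romanovski–Routh polynomials `𝒫ₙ(b;x)` with `b = λ + iη`,
defined by the three-term recurrence (real version). -/
noncomputable def crr (lam eta : ℝ) : ℕ → ℝ → ℝ
  | 0, _ => 1
  | 1, x => x - eta / lam
  | n + 2, x =>
      (x - eta / (lam + n + 1)) * crr lam eta (n + 1) x -
        ((n + 1) * (2 * lam + n) / (4 * (lam + n) * (lam + n + 1))) *
          (x ^ 2 + 1) * crr lam eta n x

lemma crr_zero (lam eta : ℝ) (x : ℝ) : crr lam eta 0 x = 1 := rfl

lemma crr_one (lam eta : ℝ) (x : ℝ) : crr lam eta 1 x = x - eta / lam := rfl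

lemma crr_add_two (lam eta : ℝ) (n : ℕ) (x : ℝ) :
    crr lam eta (n + 2) x =
      (x - eta / (lam + n + 1)) * crr lam eta (n + 1) x -
        ((n + 1) * (2 * lam + n) / (4 * (lam + n) * (lam + n + 1))) *
          (x ^ 2 + 1) * crr lam eta n x := rfl

/-- The key derivative relation: `𝒫ₙ₊₁' = γₙ₊₁ 𝒫ₙ`. -/
lemma crr_hasDerivAt (lam eta : ℝ) (hlam : 0 < lam) (n : ℕ) (x : ℝ) :
    HasDerivAt (crr lam eta (n + 1))
      ((((n : ℝ) + 1) * (2 * lam + n) / (2 * (lam + n))) * crr lam eta n x) x := by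
  induction n using Nat.twoStepInduction generalizing x with
  | zero =>
    have h : crr lam eta 1 = fun y => y - eta / lam := rfl
    rw [h]
    have hD : HasDerivAt (fun y : ℝ => y - eta / lam) 1 x := (hasDerivAt_id x).sub_const _
    convert hD using 1
    have hl : lam ≠ 0 := ne_of_gt hlam
    rw [crr_zero]
    push_cast
    field_simp
    ring
  | one =>
    have h : crr lam eta 2 = fun y =>
        (y - eta / (lam + (0:ℝ) + 1)) * (y - eta / lam) -
          ((0:ℝ) + 1) * (2 * lam + (0:ℝ)) / (4 * (lam + (0:ℝ)) * (lam + (0:ℝ) + 1)) *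
            (y ^ 2 + 1) * 1 := by
      funext y
      have := crr_add_two lam eta 0 y
      rw [crr_one, crr_zero] at this
      push_cast at this
      exact this
    rw [h]
    have hD := (((hasDerivAt_id x).sub_const (eta / (lam + (0:ℝ) + 1))).mul
        ((hasDerivAt_id x).sub_const (eta / lam))).sub
      ((((hasDerivAt_pow 2 x).add_const 1).const_mul
          (((0:ℝ) + 1) * (2 * lam + (0:ℝ)) / (4 * (lam + (0:ℝ)) * (lam + (0:ℝ) + 1)))).mul
        (hasDerivAt_const x (1:ℝ)))
    convert hD using 1
    · rfl
    · rfl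
    · rfl
    rw [crr_one]
    have hl : lam ≠ 0 := ne_of_gt hlam
    have hl1 : lam + 1 ≠ 0 := by positivity
    push_cast
    norm_num
    field_simp
    ring
  | more m ih1 ih2 =>
    have h : crr lam eta (m + 3) = fun y =>
        (y - eta / (lam + ((m:ℝ) + 1) + 1)) * crr lam eta (m + 2) y -
          ((((m:ℝ) + 1) + 1) * (2 * lam + ((m:ℝ) + 1)) /
            (4 * (lam + ((m:ℝ) + 1)) * (lam + ((m:ℝ) + 1) + 1))) *
            (y ^ 2 + 1) * crr lam eta (m + 1) y := by
      funext y
      have := crr_add_two lam eta (m + 1) y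
      push_cast at this ⊢
      convert this using 3
    rw [h]
    set d : ℝ := (((m:ℝ) + 1) + 1) * (2 * lam + ((m:ℝ) + 1)) /
        (4 * (lam + ((m:ℝ) + 1)) * (lam + ((m:ℝ) + 1) + 1)) with hdef
    have e2 : HasDerivAt (crr lam eta (m + 2))
        ((((m:ℝ) + 1) + 1) * (2 * lam + ((m:ℝ) + 1)) / (2 * (lam + ((m:ℝ) + 1))) *
          crr lam eta (m + 1) x) x := by
      have := ih2 x
      push_cast at this ⊢
      convert this using 2
    have e1 : HasDerivAt (crr lam eta (m + 1))
        ((((m:ℝ)) + 1) * (2 * lam + (m:ℝ)) / (2 * (lam + (m:ℝ))) * crr lam eta m x) x :=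
      ih1 x
    have hD := (((hasDerivAt_id x).sub_const (eta / (lam + ((m:ℝ) + 1) + 1))).mul e2).sub
      ((((hasDerivAt_pow 2 x).add_const 1).const_mul d).mul e1)
    convert hD using 1
    · rfl
    · rfl
    · rfl
    have hm0 : lam + (m:ℝ) ≠ 0 := by positivity
    have hm1 : lam + (m:ℝ) + 1 ≠ 0 := by positivity
    have hm2 : lam + (m:ℝ) + 2 ≠ 0 := by positivity
    rw [crr_add_two lam eta m x, hdef]
    push_cast
    norm_num
    set P1 := crr lam eta (m + 1) x
    set P0 := crr lam eta m x
    field_simp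
    ring

lemma crr_deriv_eq (lam eta : ℝ) (hlam : 0 < lam) (n : ℕ) :
    deriv (crr lam eta (n + 1)) =
      fun x => (((n : ℝ) + 1) * (2 * lam + n) / (2 * (lam + n))) * crr lam eta n x := by
  funext x
  exact (crr_hasDerivAt lam eta hlam n x).deriv

theorem stmt4 (lam eta : ℝ) (hlam : 0 < lam) (n : ℕ) (hn : 1 ≤ n) (x : ℝ) :
    (x ^ 2 + 1) * deriv (deriv (crr lam eta n)) x -
        2 * ((lam + n - 1) * x - eta) * deriv (crr lam eta n) x +
      n * (n - 1 + 2 * lam) * crr lam eta n x = 0 := by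
  have hl : lam ≠ 0 := ne_of_gt hlam
  match n, hn with
  | 1, _ =>
    have hd := crr_deriv_eq lam eta hlam 0
    rw [hd]
    simp only [Nat.cast_zero, crr_zero, crr_one, Nat.cast_one]
    rw [deriv_const']
    field_simp
    ring
  | (k + 2), _ =>
    have hd2 := crr_deriv_eq lam eta hlam (k + 1)
    have hd1 := crr_deriv_eq lam eta hlam k
    rw [hd2]
    have hdd : deriv (fun x =>
        ((((k:ℕ)+1 : ℕ) : ℝ) + 1) * (2 * lam + (((k:ℕ)+1 : ℕ) : ℝ)) /
          (2 * (lam + (((k:ℕ)+1 : ℕ) : ℝ))) * crr lam eta (k + 1) x) x =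
        ((((k:ℕ)+1 : ℕ) : ℝ) + 1) * (2 * lam + (((k:ℕ)+1 : ℕ) : ℝ)) /
          (2 * (lam + (((k:ℕ)+1 : ℕ) : ℝ))) *
          ((((k:ℝ)) + 1) * (2 * lam + (k:ℝ)) / (2 * (lam + (k:ℝ))) * crr lam eta k x) := by
      rw [deriv_const_mul _ (crr_hasDerivAt lam eta hlam k x).differentiableAt]
      rw [(crr_hasDerivAt lam eta hlam k x).deriv]
    rw [hdd]
    rw [crr_add_two lam eta k x]
    have hm0 : lam + (k:ℝ) ≠ 0 := by positivity
    have hm1 : lam + (k:ℝ) + 1 ≠ 0 := by positivity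
    push_cast
    set P1 := crr lam eta (k + 1) x
    set P0 := crr lam eta k x
    field_simp
    ring
end

section
/- Let α > −1/2 be real and define the Bessel function of the first kind by its series J_α(w) = Σ_{k=0}^{∞} (−1)ᵏ (w/2)^{2k+α} / (k! · Γ(k+α+1)) for w > 0. Let 𝒫̂ₙ(α+1/2;x) denote the monic complementary Romanovski–Routh polynomials with parameter b = α + 1/2 (i.e., λ = α + 1/2, η = 0). Then for every x ∈ ℝ and every w > 0, e^{xw} · J_α(w) = (1/Γ(α+1)) · (w/2)^α · Σ_{n=0}^{∞} 𝒫̂ₙ(α+1/2; x) · wⁿ/n!. -/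
open Real

/-- Monic complementary Romanovski–Routh polynomials
`𝒫̂ₙ(b;x) = (2ⁿ(λ)ₙ/(2λ)ₙ)·𝒫ₙ(b;x)`. -/
noncomputable def crrMonic (lam eta : ℝ) (n : ℕ) (x : ℝ) : ℝ :=
  (2 ^ n * Polynomial.eval lam (ascPochhammer ℝ n) /
      Polynomial.eval (2 * lam) (ascPochhammer ℝ n)) * crr lam eta n x

lemma crrMonic_rec (lam : ℝ) (hlam : 0 < lam) (n : ℕ) (x : ℝ) :
    crrMonic lam 0 (n+2) x =
      (2*(lam+n+1)/(2*lam+n+1)) * x * crrMonic lam 0 (n+1) x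
        - ((n+1)/(2*lam+n+1)) * (x^2+1) * crrMonic lam 0 n x := by
  have h1 : (0:ℝ) < lam + n := by positivity
  have h2 : (0:ℝ) < lam + n + 1 := by positivity
  have h3 : (0:ℝ) < 2*lam + n := by positivity
  have h4 : (0:ℝ) < 2*lam + n + 1 := by positivity
  have hp : 0 < (ascPochhammer ℝ n).eval lam := ascPochhammer_pos n lam hlam
  have hq : 0 < (ascPochhammer ℝ n).eval (2*lam) := ascPochhammer_pos n (2*lam) (by linarith)
  simp only [crrMonic, crr, ascPochhammer_succ_eval]
  push_cast
  field_simp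
  ring

noncomputable def crrU (α x : ℝ) (n k : ℕ) : ℝ :=
  if 2*k ≤ n then
    (-1:ℝ)^k * x^(n-2*k) /
      ((n-2*k).factorial * k.factorial * 4^k * Real.Gamma (k + α + 1))
  else 0

lemma crrU_of_le (α x : ℝ) {n k m : ℕ} (h : n = 2*k + m) :
    crrU α x n k =
      (-1:ℝ)^k * x^m / (m.factorial * k.factorial * 4^k * Real.Gamma (k + α + 1)) := by
  subst h; unfold crrU
  rw [if_pos (by omega), show 2*k+m-2*k = m from by omega]

lemma crrU_of_gt (α x : ℝ) {n k : ℕ} (h : n < 2*k) : crrU α x n k = 0 := by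
  unfold crrU; rw [if_neg (by omega)]

lemma fact_cast_succ (q : ℕ) : ((q+1).factorial : ℝ) = (q+1) * q.factorial := by
  rw [Nat.factorial_succ]; push_cast; ring

lemma fact_cast_succ2 (q : ℕ) : ((q+2).factorial : ℝ) = (q+2) * ((q+1) * q.factorial) := by
  rw [show q+2 = q+1+1 from rfl, fact_cast_succ, fact_cast_succ]; push_cast; ring

lemma crr_point (α x : ℝ) (hα : -(1/2) < α) (n k : ℕ) :
    ((2*(α+1/2)+(n:ℝ)+1) * (Real.Gamma (α+1) * ((n+2).factorial : ℝ))) * crrU α x (n+2) k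
      = ((2*(α+1/2+(n:ℝ)+1)) * x * (Real.Gamma (α+1) * ((n+1).factorial : ℝ))) * crrU α x (n+1) k
        - (((n:ℝ)+1) * x^2 * (Real.Gamma (α+1) * (n.factorial : ℝ))) * crrU α x n k
        - (((n:ℝ)+1) * (Real.Gamma (α+1) * (n.factorial : ℝ))) *
            (if k = 0 then 0 else crrU α x n (k-1)) := by
  have hn0 : (0:ℝ) ≤ n := Nat.cast_nonneg n
  have hΓa : (0:ℝ) < Real.Gamma (α+1) := Real.Gamma_pos_of_pos (by linarith)
  have hΓ : ∀ j : ℕ, 0 < Real.Gamma ((j:ℝ) + α + 1) := fun j => by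
    have : (0:ℝ) ≤ j := Nat.cast_nonneg j
    exact Real.Gamma_pos_of_pos (by linarith)
  have hΓs : ∀ j : ℕ, Real.Gamma ((j:ℝ) + 1 + α + 1) = ((j:ℝ)+α+1) * Real.Gamma ((j:ℝ)+α+1) := by
    intro j
    have : (0:ℝ) ≤ j := Nat.cast_nonneg j
    rw [show (j:ℝ)+1+α+1 = ((j:ℝ)+α+1)+1 by ring, Real.Gamma_add_one (by linarith)]
  rcases k with _ | k'
  · rw [crrU_of_le α x (show n+2 = 2*0 + (n+2) from by omega),
        crrU_of_le α x (show n+1 = 2*0 + (n+1) from by omega),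
        crrU_of_le α x (show n = 2*0 + n from by omega), if_pos rfl]
    rw [fact_cast_succ2 n, fact_cast_succ n]
    push_cast
    have hfn : ((n.factorial : ℝ)) ≠ 0 := Nat.cast_ne_zero.mpr n.factorial_ne_zero
    have h0 : Real.Gamma ((0:ℝ) + α + 1) = Real.Gamma (α+1) := by norm_num
    rw [h0]
    field_simp
    ring
  · have hne : (k'+1) ≠ 0 := Nat.succ_ne_zero k'
    have hfk : ((k'.factorial : ℝ)) ≠ 0 := Nat.cast_ne_zero.mpr k'.factorial_ne_zero
    have hΓk := (hΓ k').ne'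
    have hk0 : (0:ℝ) ≤ k' := Nat.cast_nonneg k'
    have hΓk1 : ((k':ℝ)+α+1) ≠ 0 := by linarith
    have h4 : ((4:ℝ))^(k'+1) ≠ 0 := by positivity
    have hk1 : ((k':ℝ)+1) ≠ 0 := by linarith
    by_cases h1 : 2*(k'+1) ≤ n
    · obtain ⟨m, rfl⟩ : ∃ m, n = 2*(k'+1) + m := ⟨n - 2*(k'+1), by omega⟩
      rw [crrU_of_le α x (show 2*(k'+1)+m+2 = 2*(k'+1) + (m+2) from by omega),
          crrU_of_le α x (show 2*(k'+1)+m+1 = 2*(k'+1) + (m+1) from by omega),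
          crrU_of_le α x (show 2*(k'+1)+m = 2*(k'+1) + m from rfl),
          if_neg hne,
          crrU_of_le α x (show 2*(k'+1)+m = 2*(k'+1-1) + (m+2) from by omega)]
      rw [show k'+1-1 = k' from rfl]
      rw [fact_cast_succ2 (2*(k'+1)+m), fact_cast_succ (2*(k'+1)+m),
          fact_cast_succ2 m, fact_cast_succ m, fact_cast_succ k']
      push_cast
      rw [hΓs k']
      have hfm : ((m.factorial : ℝ)) ≠ 0 := Nat.cast_ne_zero.mpr m.factorial_ne_zero
      have hm0 : (0:ℝ) ≤ m := Nat.cast_nonneg m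
      have hm1 : ((m:ℝ)+1) ≠ 0 := by linarith
      have hm2 : ((m:ℝ)+2) ≠ 0 := by linarith
      field_simp
      ring
    · by_cases h2 : 2*(k'+1) = n+1
      · have hn : n = 2*k'+1 := by omega
        subst hn
        rw [crrU_of_le α x (show 2*k'+1+2 = 2*(k'+1) + 1 from by omega),
            crrU_of_le α x (show 2*k'+1+1 = 2*(k'+1) + 0 from by omega),
            crrU_of_gt α x (show 2*k'+1 < 2*(k'+1) from by omega),
            if_neg hne,
            crrU_of_le α x (show 2*k'+1 = 2*(k'+1-1) + 1 from by omega)]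
        rw [show k'+1-1 = k' from rfl]
        rw [fact_cast_succ2 (2*k'+1), fact_cast_succ (2*k'+1), fact_cast_succ k']
        push_cast
        rw [hΓs k']
        have hfn : (((2*k'+1).factorial : ℝ)) ≠ 0 := Nat.cast_ne_zero.mpr (Nat.factorial_ne_zero _)
        field_simp
        ring
      · by_cases h3 : 2*(k'+1) = n+2
        · have hn : n = 2*k' := by omega
          subst hn
          rw [crrU_of_le α x (show 2*k'+2 = 2*(k'+1) + 0 from by omega),
              crrU_of_gt α x (show 2*k'+1 < 2*(k'+1) from by omega),
              crrU_of_gt α x (show 2*k' < 2*(k'+1) from by omega),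
              if_neg hne,
              crrU_of_le α x (show 2*k' = 2*(k'+1-1) + 0 from by omega)]
          rw [show k'+1-1 = k' from rfl]
          rw [fact_cast_succ2 (2*k'), fact_cast_succ (2*k'), fact_cast_succ k']
          push_cast
          rw [hΓs k']
          have hfn : (((2*k').factorial : ℝ)) ≠ 0 := Nat.cast_ne_zero.mpr (Nat.factorial_ne_zero _)
          field_simp
          ring
        · rw [crrU_of_gt α x (show n+2 < 2*(k'+1) from by omega),
              crrU_of_gt α x (show n+1 < 2*(k'+1) from by omega),
              crrU_of_gt α x (show n < 2*(k'+1) from by omega),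
              if_neg hne,
              crrU_of_gt α x (show n < 2*(k'+1-1) from by omega)]
          simp

lemma crr_step_sum (α x : ℝ) (hα : -(1/2) < α) (n : ℕ) :
    Real.Gamma (α+1) * ((n+2).factorial : ℝ) * ∑ k ∈ Finset.range (n+2+1), crrU α x (n+2) k
      = (2*(α+1/2+(n:ℝ)+1)/(2*(α+1/2)+(n:ℝ)+1)) * x *
          (Real.Gamma (α+1) * ((n+1).factorial : ℝ) * ∑ k ∈ Finset.range (n+1+1), crrU α x (n+1) k)
        - (((n:ℝ)+1)/(2*(α+1/2)+(n:ℝ)+1)) * (x^2+1) *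
          (Real.Gamma (α+1) * (n.factorial : ℝ) * ∑ k ∈ Finset.range (n+1), crrU α x n k) := by
  have hn0 : (0:ℝ) ≤ n := Nat.cast_nonneg n
  have hD : (2*(α+1/2)+(n:ℝ)+1) ≠ 0 := by linarith
  have e1 : ∑ k ∈ Finset.range (n+3), crrU α x (n+1) k = ∑ k ∈ Finset.range (n+2), crrU α x (n+1) k := by
    rw [Finset.sum_range_succ, crrU_of_gt α x (show n+1 < 2*(n+2) from by omega), add_zero]
  have e3 : ∑ k ∈ Finset.range (n+3), crrU α x n k = ∑ k ∈ Finset.range (n+1), crrU α x n k := by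
    rw [Finset.sum_range_succ, Finset.sum_range_succ,
        crrU_of_gt α x (show n < 2*(n+2) from by omega),
        crrU_of_gt α x (show n < 2*(n+1) from by omega), add_zero, add_zero]
  have e2 : ∑ k ∈ Finset.range (n+3), (if k = 0 then (0:ℝ) else crrU α x n (k-1))
      = ∑ k ∈ Finset.range (n+1), crrU α x n k := by
    rw [Finset.sum_range_succ' (fun k => if k = 0 then (0:ℝ) else crrU α x n (k-1)) (n+2)]
    simp only [Nat.succ_ne_zero, if_false, Nat.add_sub_cancel, if_true, eq_self_iff_true, add_zero]
    rw [Finset.sum_range_succ, crrU_of_gt α x (show n < 2*(n+1) from by omega), add_zero]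
  have key : ∑ k ∈ Finset.range (n+3),
        ((2*(α+1/2)+(n:ℝ)+1) * (Real.Gamma (α+1) * ((n+2).factorial : ℝ))) * crrU α x (n+2) k
      = ∑ k ∈ Finset.range (n+3),
        (((2*(α+1/2+(n:ℝ)+1)) * x * (Real.Gamma (α+1) * ((n+1).factorial : ℝ))) * crrU α x (n+1) k
          - (((n:ℝ)+1) * x^2 * (Real.Gamma (α+1) * (n.factorial : ℝ))) * crrU α x n k
          - (((n:ℝ)+1) * (Real.Gamma (α+1) * (n.factorial : ℝ))) *
              (if k = 0 then 0 else crrU α x n (k-1))) :=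
    Finset.sum_congr rfl fun k _ => crr_point α x hα n k
  rw [← Finset.mul_sum] at key
  rw [Finset.sum_sub_distrib, Finset.sum_sub_distrib, ← Finset.mul_sum, ← Finset.mul_sum,
      ← Finset.mul_sum, e1, e2, e3] at key
  have hgoal : (2*(α+1/2)+(n:ℝ)+1) *
      (Real.Gamma (α+1) * ((n+2).factorial : ℝ) * ∑ k ∈ Finset.range (n+2+1), crrU α x (n+2) k)
      = (2*(α+1/2+(n:ℝ)+1)) * x *
          (Real.Gamma (α+1) * ((n+1).factorial : ℝ) * ∑ k ∈ Finset.range (n+1+1), crrU α x (n+1) k)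
        - ((n:ℝ)+1) * (x^2+1) *
          (Real.Gamma (α+1) * (n.factorial : ℝ) * ∑ k ∈ Finset.range (n+1), crrU α x n k) := by
    rw [show n+2+1 = n+3 from rfl, show n+1+1 = n+2 from rfl]
    linear_combination key
  have hform : (2*(α+1/2+(n:ℝ)+1)/(2*(α+1/2)+(n:ℝ)+1)) * x *
          (Real.Gamma (α+1) * ((n+1).factorial : ℝ) * ∑ k ∈ Finset.range (n+1+1), crrU α x (n+1) k)
        - (((n:ℝ)+1)/(2*(α+1/2)+(n:ℝ)+1)) * (x^2+1) *
          (Real.Gamma (α+1) * (n.factorial : ℝ) * ∑ k ∈ Finset.range (n+1), crrU α x n k)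
      = (1/(2*(α+1/2)+(n:ℝ)+1)) *
          ((2*(α+1/2+(n:ℝ)+1)) * x *
            (Real.Gamma (α+1) * ((n+1).factorial : ℝ) * ∑ k ∈ Finset.range (n+1+1), crrU α x (n+1) k)
          - ((n:ℝ)+1) * (x^2+1) *
            (Real.Gamma (α+1) * (n.factorial : ℝ) * ∑ k ∈ Finset.range (n+1), crrU α x n k)) := by
    ring
  rw [hform, ← hgoal, one_div, inv_mul_cancel_left₀ hD]

lemma crr_key (α : ℝ) (hα : -(1/2) < α) (x : ℝ) (n : ℕ) :
    crrMonic (α+1/2) 0 n x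
      = Real.Gamma (α+1) * (n.factorial : ℝ) * ∑ k ∈ Finset.range (n+1), crrU α x n k := by
  have hΓa : (0:ℝ) < Real.Gamma (α+1) := Real.Gamma_pos_of_pos (by linarith)
  induction n using Nat.twoStepInduction with
  | zero =>
    have h0 : Real.Gamma ((0:ℝ) + α + 1) = Real.Gamma (α+1) := by norm_num
    simp [crrMonic, crr, crrU, h0]
    field_simp
  | one =>
    have h0 : Real.Gamma ((0:ℝ) + α + 1) = Real.Gamma (α+1) := by norm_num
    have hl : (2*(α+1/2)) ≠ 0 := by linarith
    rw [Finset.sum_range_succ, Finset.sum_range_one,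
        crrU_of_gt α x (show 1 < 2*1 from by omega),
        crrU_of_le α x (show 1 = 2*0 + 1 from rfl), add_zero]
    simp [crrMonic, crr, ascPochhammer_one, h0]
    have h2 : (α + (2:ℝ)⁻¹) ≠ 0 := by norm_num; linarith
    have h3 : (α*2+1 : ℝ) ≠ 0 := by linarith
    field_simp
    exact mul_div_cancel_left₀ x (by linarith)
  | more n ih ih1 =>
    rw [crrMonic_rec (α+1/2) (by linarith) n x, ih1, ih]
    have := crr_step_sum α x hα n
    push_cast at this ⊢
    linarith [this]

/-- The Bessel function of the first kind `J_α(w)`, defined by its series for `w > 0`. -/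
noncomputable def besselJ (α : ℝ) (w : ℝ) : ℝ :=
  ∑' k : ℕ, (-1 : ℝ) ^ k * (w / 2) ^ (2 * (k : ℝ) + α) /
    (Nat.factorial k * Real.Gamma (k + α + 1))

theorem stmt15 (α : ℝ) (hα : -(1 / 2) < α) (x : ℝ) (w : ℝ) (hw : 0 < w) :
    HasSum
      (fun n : ℕ =>
        (1 / Real.Gamma (α + 1)) * (w / 2) ^ α *
          (crrMonic (α + 1 / 2) 0 n x * w ^ n / Nat.factorial n))
      (Real.exp (x * w) * besselJ α w) := by
  have hΓa : (0:ℝ) < Real.Gamma (α+1) := Real.Gamma_pos_of_pos (by linarith)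
  have hΓ : ∀ j : ℕ, 0 < Real.Gamma ((j:ℝ) + α + 1) := fun j => by
    have : (0:ℝ) ≤ j := Nat.cast_nonneg j
    exact Real.Gamma_pos_of_pos (by linarith)
  set g : ℕ → ℝ :=
    fun k => (-1:ℝ)^k * w^(2*k) / (4^k * ((k.factorial : ℝ) * Real.Gamma ((k:ℝ) + α + 1)))
    with hg_def
  -- Gamma lower bound
  have hlb : ∀ k : ℕ, ((k.factorial:ℝ)/2^k) * Real.Gamma (α+1) ≤ Real.Gamma ((k:ℝ)+α+1) := by
    intro k
    induction k with
    | zero => simp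
    | succ k ih =>
      have hk0 : (0:ℝ) ≤ k := Nat.cast_nonneg k
      have hΓs : Real.Gamma (((k+1:ℕ):ℝ) + α + 1) = ((k:ℝ)+α+1) * Real.Gamma ((k:ℝ)+α+1) := by
        push_cast
        rw [show (k:ℝ)+1+α+1 = ((k:ℝ)+α+1)+1 by ring, Real.Gamma_add_one (by linarith)]
      rw [hΓs]
      have h1 : (((k+1).factorial:ℝ)/2^(k+1)) * Real.Gamma (α+1)
          = (((k:ℝ)+1)/2) * (((k.factorial:ℝ)/2^k) * Real.Gamma (α+1)) := by
        rw [fact_cast_succ]; push_cast; ring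
      rw [h1]
      have hA : ((k:ℝ)+1)/2 ≤ (k:ℝ)+α+1 := by linarith
      have hBpos : 0 ≤ ((k.factorial:ℝ)/2^k) * Real.Gamma (α+1) :=
        mul_nonneg (by positivity) hΓa.le
      exact mul_le_mul hA ih hBpos (by linarith)
  have hgnorm : ∀ k : ℕ, ‖g k‖ = w^(2*k) / (4^k * ((k.factorial : ℝ) * Real.Gamma ((k:ℝ)+α+1))) := by
    intro k
    have hden : (0:ℝ) < 4^k * ((k.factorial : ℝ) * Real.Gamma ((k:ℝ)+α+1)) :=
      mul_pos (by positivity) (mul_pos (by exact_mod_cast k.factorial_pos) (hΓ k))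
    rw [hg_def]
    rw [Real.norm_eq_abs, abs_div, abs_mul, abs_pow, abs_pow, abs_neg, abs_one, one_pow, one_mul,
        abs_of_pos hw, abs_of_pos hden]
  have hgsum : Summable fun k => ‖g k‖ := by
    apply Summable.of_nonneg_of_le (fun k => norm_nonneg _) (fun k => ?_)
      ((Real.summable_pow_div_factorial (w^2/2)).mul_right (1/Real.Gamma (α+1)))
    rw [hgnorm k]
    have hr : (w^2/2)^k/(k.factorial:ℝ) * (1/Real.Gamma (α+1))
        = w^(2*k) / (2^k * (k.factorial:ℝ) * Real.Gamma (α+1)) := by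
      rw [div_pow, ← pow_mul]; ring
    rw [hr]
    have h2 : (1:ℝ) ≤ (k.factorial:ℝ) := by exact_mod_cast k.factorial_pos
    have h4 : ((4:ℝ))^k = 2^k * 2^k := by rw [← mul_pow]; norm_num
    have hlbk := hlb k
    have t2 : ((k.factorial:ℝ)/2^k) * Real.Gamma (α+1) = (k.factorial:ℝ) * Real.Gamma (α+1) / 2^k := by
      ring
    rw [t2, div_le_iff₀ (by positivity)] at hlbk
    have hcomp : (2:ℝ)^k * (k.factorial:ℝ) * Real.Gamma (α+1)
        ≤ 4^k * ((k.factorial:ℝ) * Real.Gamma ((k:ℝ)+α+1)) := by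
      calc (2:ℝ)^k * (k.factorial:ℝ) * Real.Gamma (α+1)
          = 2^k * ((k.factorial:ℝ) * Real.Gamma (α+1)) := by ring
        _ ≤ 2^k * (Real.Gamma ((k:ℝ)+α+1) * 2^k) :=
            mul_le_mul_of_nonneg_left hlbk (by positivity)
        _ = 4^k * Real.Gamma ((k:ℝ)+α+1) := by rw [h4]; ring
        _ ≤ 4^k * ((k.factorial:ℝ) * Real.Gamma ((k:ℝ)+α+1)) :=
            mul_le_mul_of_nonneg_left (le_mul_of_one_le_left (hΓ k).le h2) (by positivity)
    exact div_le_div_of_nonneg_left (by positivity) (by positivity) hcomp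
  have hg : Summable g := hgsum.of_norm
  -- exponential series
  have hF : HasSum (fun m : ℕ => x^m * w^m / (m.factorial : ℝ)) (Real.exp (x*w)) := by
    have h := NormedSpace.expSeries_div_hasSum_exp (𝔸 := ℝ) (x*w)
    rw [← Real.exp_eq_exp_ℝ] at h
    simpa [mul_pow] using h
  have hFnorm : Summable (fun m : ℕ => ‖x^m * w^m / (m.factorial : ℝ)‖) := by
    apply Summable.congr (Real.summable_pow_div_factorial |x*w|)
    intro m
    simp [Real.norm_eq_abs, abs_div, abs_mul, abs_pow, Nat.abs_cast, mul_pow]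
  -- even spread of g
  set G : ℕ → ℝ := fun j => if Even j then g (j/2) else 0 with hG_def
  have hcomp2 : ∀ k : ℕ, G (2*k) = g k := by
    intro k
    rw [hG_def]
    simp only
    rw [if_pos (even_two_mul k), Nat.mul_div_cancel_left k (by norm_num)]
  have hinj : Function.Injective (fun k : ℕ => 2*k) := fun a b h =>
    Nat.eq_of_mul_eq_mul_left (by norm_num) h
  have hvanish : ∀ j, j ∉ Set.range (fun k : ℕ => 2*k) → G j = 0 := by
    intro j hj
    have hodd : ¬ Even j := by
      intro he
      obtain ⟨r, rfl⟩ := he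
      exact hj ⟨r, by show 2*r = r + r; omega⟩
    rw [hG_def]
    simp only
    rw [if_neg hodd]
  have hGsum : HasSum G (∑' k, g k) := by
    rw [← Function.Injective.hasSum_iff hinj hvanish]
    have : (G ∘ fun k => 2*k) = g := funext fun k => hcomp2 k
    rw [this]
    exact hg.hasSum
  have hGnorm : Summable fun j => ‖G j‖ := by
    refine (Function.Injective.summable_iff hinj ?_).mp ?_
    · intro j hj; rw [hvanish j hj, norm_zero]
    · have : ((fun j => ‖G j‖) ∘ fun k => 2*k) = fun k => ‖g k‖ :=
        funext fun k => by simp only [Function.comp]; rw [hcomp2 k]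
      rw [this]
      exact hgsum
  -- Cauchy product
  have hprod : HasSum (fun n => ∑ k ∈ Finset.range (n+1), (x^k * w^k / (k.factorial : ℝ)) * G (n-k))
      (Real.exp (x*w) * ∑' k, g k) := by
    have h := hasSum_sum_range_mul_of_summable_norm hFnorm hGnorm
    rwa [hF.tsum_eq, hGsum.tsum_eq] at h
  -- besselJ in terms of g
  have hbes : besselJ α w = (w/2)^α * ∑' k, g k := by
    unfold besselJ
    rw [← tsum_mul_left]
    refine tsum_congr fun k => ?_
    have hw2 : (0:ℝ) < w/2 := by linarith
    rw [show 2*(k:ℝ)+α = ((2*k : ℕ):ℝ) + α by push_cast; ring, Real.rpow_add hw2,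
        Real.rpow_natCast]
    have h4 : ((w/2):ℝ)^(2*k) = w^(2*k)/4^k := by
      rw [div_pow, pow_mul, pow_mul]; norm_num
    rw [h4, hg_def]
    have hΓk := (hΓ k).ne'
    have hfk : ((k.factorial:ℝ)) ≠ 0 := Nat.cast_ne_zero.mpr k.factorial_ne_zero
    have h4k : ((4:ℝ))^k ≠ 0 := by positivity
    field_simp
  -- per-n identity
  have hfun : ∀ n : ℕ, (1 / Real.Gamma (α + 1)) * (w / 2) ^ α *
          (crrMonic (α + 1/2) 0 n x * w ^ n / Nat.factorial n)
      = (w/2)^α * ∑ k ∈ Finset.range (n+1), (x^k * w^k / (k.factorial : ℝ)) * G (n-k) := by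
    intro n
    have hsum : ∑ k ∈ Finset.range (n+1), (x^k * w^k / (k.factorial : ℝ)) * G (n-k)
        = w^n * ∑ k ∈ Finset.range (n+1), crrU α x n k := by
      have hrefl : ∑ k ∈ Finset.range (n+1), (x^k * w^k / (k.factorial : ℝ)) * G (n-k)
          = ∑ j ∈ Finset.range (n+1), (x^(n-j) * w^(n-j) / ((n-j).factorial : ℝ)) * G j := by
        rw [← Finset.sum_range_reflect (fun k => (x^k * w^k / (k.factorial : ℝ)) * G (n-k)) (n+1)]
        refine Finset.sum_congr rfl fun j hj => ?_
        simp only [Finset.mem_range] at hj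
        rw [show n+1-1-j = n-j from by omega, show n - (n-j) = j from by omega]
      rw [hrefl]
      have hfilter : ∑ j ∈ Finset.range (n+1), (x^(n-j) * w^(n-j) / ((n-j).factorial : ℝ)) * G j
          = ∑ j ∈ (Finset.range (n+1)).filter (fun j => Even j),
              (x^(n-j) * w^(n-j) / ((n-j).factorial : ℝ)) * G j := by
        refine (Finset.sum_filter_of_ne fun j _ hne => ?_).symm
        by_contra hodd
        apply hne
        rw [hG_def]
        simp only
        rw [if_neg hodd, mul_zero]
      rw [hfilter]
      have himg : (Finset.range (n+1)).filter (fun j => Even j)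
          = (Finset.range (n/2+1)).image (fun k => 2*k) := by
        ext j
        simp only [Finset.mem_filter, Finset.mem_range, Finset.mem_image, Nat.even_iff]
        constructor
        · rintro ⟨h1, h2⟩; exact ⟨j/2, by omega, by omega⟩
        · rintro ⟨k, hk, rfl⟩; omega
      rw [himg, Finset.sum_image (fun a _ b _ h => Nat.eq_of_mul_eq_mul_left (by norm_num) h)]
      have hsub : ∑ k ∈ Finset.range (n+1), crrU α x n k
          = ∑ k ∈ Finset.range (n/2+1), crrU α x n k := by
        refine (Finset.sum_subset (Finset.range_subset_range.mpr (by omega)) fun k hk hnk => ?_).symm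
        simp only [Finset.mem_range] at hk hnk
        exact crrU_of_gt α x (by omega)
      rw [hsub, Finset.mul_sum]
      refine Finset.sum_congr rfl fun k hk => ?_
      simp only [Finset.mem_range] at hk
      have h2k : 2*k ≤ n := by omega
      rw [hcomp2 k, crrU_of_le α x (show n = 2*k + (n - 2*k) from by omega), hg_def]
      have hwsplit : w^n = w^(n-2*k) * w^(2*k) := by rw [← pow_add]; congr 1; omega
      rw [hwsplit]
      have hΓk := (hΓ k).ne'
      have hfk : ((k.factorial:ℝ)) ≠ 0 := Nat.cast_ne_zero.mpr k.factorial_ne_zero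
      have hfm : (((n-2*k).factorial:ℝ)) ≠ 0 := Nat.cast_ne_zero.mpr (Nat.factorial_ne_zero _)
      have h4k : ((4:ℝ))^k ≠ 0 := by positivity
      field_simp
    rw [hsum, crr_key α hα x n]
    have hfn : ((n.factorial:ℝ)) ≠ 0 := Nat.cast_ne_zero.mpr n.factorial_ne_zero
    field_simp
  have hmain := hprod.mul_left ((w/2)^α)
  have hval : Real.exp (x*w) * besselJ α w = (w/2)^α * (Real.exp (x*w) * ∑' k, g k) := by
    rw [hbes]; ring
  have hfe : (fun n : ℕ => (1 / Real.Gamma (α + 1)) * (w / 2) ^ α *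
          (crrMonic (α + 1/2) 0 n x * w ^ n / Nat.factorial n))
      = fun n => (w/2)^α * ∑ k ∈ Finset.range (n+1), (x^k * w^k / (k.factorial : ℝ)) * G (n-k) :=
    funext hfun
  rw [hfe, hval]
  exact hmain
end
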